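/- Let p ∈ (0,1). Then: (a) the equation r(1 + log r) = p has a unique solution r* in the interval (e^{−1}, 1); and (b) r* is the unique maximizer on (0,1] of the function u ↦ (log u / log p)·(u − p). -/

import Mathlib

open Real Set

private lemma stmt8_hderiv (x : ℝ) (hx : 0 < x) :
    HasDerivAt (fun r => r * (1 + Real.log r)) (2 + Real.log x) x := by
  have h : HasDerivAt (fun r => r * (1 + Real.log r)) _ x :=
    (hasDerivAt_id x).mul ((hasDerivAt_const x (1:ℝ)).add (Real.hasDerivAt_log hx.ne'))
  convert h using 1
  field_simp
  simp only [id_eq]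
  ring

private lemma stmt8_gderiv (p x : ℝ) (hx : 0 < x) :
    HasDerivAt (fun u => Real.log u * (u - p)) (x⁻¹ * (x - p) + Real.log x) x := by
  have h : HasDerivAt (fun u => Real.log u * (u - p)) _ x :=
    (Real.hasDerivAt_log hx.ne').mul ((hasDerivAt_id x).sub_const p)
  convert h using 1
  simp only [id_eq, mul_one]

private lemma stmt8_phideriv (p x : ℝ) (hx : 0 < x) :
    HasDerivAt (fun u : ℝ => u⁻¹ * (u - p) + Real.log u)
      (-(x^2)⁻¹ * (x - p) + x⁻¹ * 1 + x⁻¹) x := by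
  exact ((hasDerivAt_inv hx.ne').mul ((hasDerivAt_id x).sub_const p)).add
    (Real.hasDerivAt_log hx.ne')

theorem stmt8 (p : ℝ) (hp : p ∈ Set.Ioo (0:ℝ) 1) :
    ∃ r : ℝ, r ∈ Set.Ioo (Real.exp (-1)) 1 ∧ r * (1 + Real.log r) = p ∧
      (∀ r' ∈ Set.Ioo (Real.exp (-1)) 1, r' * (1 + Real.log r') = p → r' = r) ∧
      (∀ u ∈ Set.Ioc (0:ℝ) 1,
        Real.log u / Real.log p * (u - p) ≤ Real.log r / Real.log p * (r - p)) ∧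
      (∀ u ∈ Set.Ioc (0:ℝ) 1,
        (∀ v ∈ Set.Ioc (0:ℝ) 1,
          Real.log v / Real.log p * (v - p) ≤ Real.log u / Real.log p * (u - p)) →
        u = r) := by
  obtain ⟨hp0, hp1⟩ := hp
  set e1 : ℝ := Real.exp (-1) with he1
  have he1pos : 0 < e1 := Real.exp_pos _
  have he1lt : e1 < 1 := by
    rw [he1]; calc Real.exp (-1) < Real.exp 0 := Real.exp_lt_exp.2 (by norm_num)
    _ = 1 := Real.exp_zero
  set h : ℝ → ℝ := fun r => r * (1 + Real.log r) with hh
  have hcont : ContinuousOn h (Icc e1 1) := by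
    intro x hx
    exact ((stmt8_hderiv x (lt_of_lt_of_le he1pos hx.1)).continuousAt).continuousWithinAt
  have hmono : StrictMonoOn h (Icc e1 1) := by
    apply strictMonoOn_of_deriv_pos (convex_Icc _ _) hcont
    intro x hx
    rw [interior_Icc] at hx
    have hx0 : 0 < x := lt_trans he1pos hx.1
    rw [(stmt8_hderiv x hx0).deriv]
    have : (-1:ℝ) < Real.log x := by
      rw [← Real.log_exp (-1)]
      exact Real.log_lt_log (Real.exp_pos _) hx.1
    linarith
  have hva : h e1 = 0 := by simp [hh, he1, Real.log_exp]
  have hvb : h 1 = 1 := by simp [hh]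
  have hmemp : p ∈ Set.Ioo (h e1) (h 1) := by rw [hva, hvb]; exact ⟨hp0, hp1⟩
  obtain ⟨r, hrmem, hr⟩ := intermediate_value_Ioo he1lt.le hcont hmemp
  have hr0 : 0 < r := lt_trans he1pos hrmem.1
  have hrp : r * (1 + Real.log r) = p := hr
  have huniq : ∀ r' ∈ Set.Ioo e1 1, r' * (1 + Real.log r') = p → r' = r := by
    intro r' hr' hpr'
    exact hmono.injOn (Ioo_subset_Icc_self hr') (Ioo_subset_Icc_self hrmem)
      (by rw [show r' * (1 + Real.log r') = h r' from rfl] at hpr'; rw [hpr', hr])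
  set φ : ℝ → ℝ := fun u => u⁻¹ * (u - p) + Real.log u with hφ
  have hr' : r + r * Real.log r = p := by linear_combination hrp
  have hφr : φ r = 0 := by
    simp only [hφ]
    field_simp
    linarith
  have hφmono : StrictMonoOn φ (Ioi 0) := by
    apply strictMonoOn_of_deriv_pos (convex_Ioi _)
    · intro x hx; exact ((stmt8_phideriv p x hx).continuousAt).continuousWithinAt
    · intro x hx
      rw [interior_Ioi] at hx
      rw [(stmt8_phideriv p x hx).deriv]
      have hx0 : (0:ℝ) < x := hx
      have key : -(x^2)⁻¹ * (x - p) + x⁻¹ * 1 + x⁻¹ = (x + p) / x^2 := by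
        field_simp; ring
      rw [key]
      positivity
  set g : ℝ → ℝ := fun u => Real.log u * (u - p) with hg
  have hganti : StrictAntiOn g (Ioc 0 r) := by
    apply strictAntiOn_of_deriv_neg (convex_Ioc _ _)
    · intro x hx; exact ((stmt8_gderiv p x hx.1).continuousAt).continuousWithinAt
    · intro x hx
      rw [interior_Ioc] at hx
      rw [(stmt8_gderiv p x hx.1).deriv]
      have h2 := hφmono (mem_Ioi.2 hx.1) (mem_Ioi.2 hr0) hx.2
      rw [hφr] at h2
      simpa [hφ] using h2
  have hgmono : StrictMonoOn g (Icc r 1) := by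
    apply strictMonoOn_of_deriv_pos (convex_Icc _ _)
    · intro x hx
      exact ((stmt8_gderiv p x (lt_of_lt_of_le hr0 hx.1)).continuousAt).continuousWithinAt
    · intro x hx
      rw [interior_Icc] at hx
      have hx0 : 0 < x := lt_trans hr0 hx.1
      rw [(stmt8_gderiv p x hx0).deriv]
      have h2 := hφmono (mem_Ioi.2 hr0) (mem_Ioi.2 hx0) hx.1
      rw [hφr] at h2
      simpa [hφ] using h2
  have hkey : ∀ u ∈ Set.Ioc (0:ℝ) 1, u ≠ r → g r < g u := by
    intro u hu hne
    rcases lt_or_gt_of_ne hne with hlt | hgt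
    · exact hganti ⟨hu.1, hlt.le⟩ ⟨hr0, le_refl r⟩ hlt
    · exact hgmono ⟨le_refl r, hrmem.2.le⟩ ⟨hgt.le, hu.2⟩ hgt
  have hlogp : Real.log p < 0 := Real.log_neg hp0 hp1
  have hrwu : ∀ u : ℝ, Real.log u / Real.log p * (u - p) = g u / Real.log p := by
    intro u; simp only [hg]; ring
  have hfle : ∀ u ∈ Set.Ioc (0:ℝ) 1,
      Real.log u / Real.log p * (u - p) ≤ Real.log r / Real.log p * (r - p) := by
    intro u hu
    have hgr : g r ≤ g u := by
      rcases eq_or_ne u r with rfl | hne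
      · exact le_rfl
      · exact (hkey u hu hne).le
    rw [hrwu u, hrwu r]
    exact (div_le_div_right_of_neg hlogp).2 hgr
  refine ⟨r, hrmem, hrp, huniq, hfle, ?_⟩
  intro u hu hmax
  by_contra hne
  have h1 := hkey u hu hne
  have h2 := hmax r ⟨hr0, hrmem.2.le⟩
  rw [hrwu u, hrwu r] at h2
  have h5 := (div_le_div_right_of_neg hlogp).1 h2
  linarith
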